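/- Let n ≥ 1 and d, d₁ be integers with 1 ≤ d₁ < d; set a = n(d − d₁) and m = n(2d − d₁). For each j ∈ {1,…,a−1} let h_j be an integer with a ≤ h_j ≤ a + j − 1, and for each j ∈ {a,…,nd−1} let g_j be an integer with a + n⌊(j−a)/n⌋ ≤ g_j ≤ a + n⌊(j−a)/n⌋ + n − 1. Then the multiset consisting of the one-point interval [a, a], the intervals [a − j, h_j] and [h_j + 1, a + j] for j = 1,…,a−1, and the intervals [0, g_j] and [g_j + 1, a + j] for j = a,…,nd−1, is an admissible proper system with parameters m = n(2d − d₁) and σ(i) = min(n d₁ + i, m − i), consisting of exactly 2nd − 1 intervals. -/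

import Mathlib

/-- `IsProperSystem m σ S` : `S` is a *proper system* with parameters `(m, σ)`, i.e. a finite
multiset of closed intervals `[a,b]` with integer endpoints (encoded as pairs `(a,b)` of
integers, one-point intervals `a = b` allowed) contained in `[0,m]`, such that for every
integer `i ∈ [0,m]` the number of intervals of `S` containing `i`, counted with multiplicity,
equals `σ i`. -/
def IsProperSystem (m : ℤ) (σ : ℤ → ℕ) (S : Multiset (ℤ × ℤ)) : Prop :=
  (∀ I ∈ S, 0 ≤ I.1 ∧ I.1 ≤ I.2 ∧ I.2 ≤ m) ∧
  ∀ i : ℤ, 0 ≤ i → i ≤ m →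
    (S.filter fun I => I.1 ≤ i ∧ i ≤ I.2).card = σ i

/-- The *graph* of a system of intervals in `[0,m]` enumerated (with multiplicity) by
`f : Fin t → ℤ × ℤ` : its vertices are the `t` intervals (`Sum.inl j` is the `j`-th interval)
together with `m` additional vertices `w_0, …, w_{m-1}` (`Sum.inr i` is `w_i`), and `w_i` is
adjacent exactly to the intervals whose right endpoint is `i` and to the intervals whose
left endpoint is `i + 1`. -/
def systemGraph (m : ℕ) {t : ℕ} (f : Fin t → ℤ × ℤ) : SimpleGraph (Fin t ⊕ Fin m) :=
  SimpleGraph.fromRel fun u v =>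
    match u, v with
    | Sum.inl j, Sum.inr i => (f j).2 = (i : ℤ) ∨ (f j).1 = (i : ℤ) + 1
    | _, _ => False

/-- A multiset of intervals in `[0,m]` is *admissible* if its graph is a tree.  (The graph is
independent, up to isomorphism, of the chosen enumeration of the multiset.) -/
def IsAdmissible (m : ℕ) (S : Multiset (ℤ × ℤ)) : Prop :=
  ∃ (t : ℕ) (f : Fin t → ℤ × ℤ), (List.ofFn f : Multiset (ℤ × ℤ)) = S ∧
    (systemGraph m f).IsTree

/-- `IsMarkedSystem m σ t M` : `M` is a *marked admissible proper system* with parameters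
`(m, σ)` consisting of exactly `t` intervals: a finite multiset of pairs `(I, p)` where `p`
is an integer point of the interval `I`, whose multiset of first components is an admissible
proper system with parameters `(m, σ)` consisting of `t` intervals. -/
def IsMarkedSystem (m : ℕ) (σ : ℤ → ℕ) (t : ℕ) (M : Multiset ((ℤ × ℤ) × ℤ)) : Prop :=
  (∀ p ∈ M, p.1.1 ≤ p.2 ∧ p.2 ≤ p.1.2) ∧
  IsProperSystem m σ (M.map Prod.fst) ∧
  IsAdmissible m (M.map Prod.fst) ∧
  M.card = t

/-- The multiset consisting of the one-point interval `[a, a]`, the intervals `[a - j, h j]`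
and `[h j + 1, a + j]` for `j = 1, …, a - 1`, and the intervals `[0, g j]` and
`[g j + 1, a + j]` for `j = a, …, N - 1`. -/
def pentagonSystem (a N : ℕ) (h g : ℕ → ℤ) : Multiset (ℤ × ℤ) :=
  ((a : ℤ), (a : ℤ)) ::ₘ
    (((Finset.Icc 1 (a - 1)).val.bind fun j =>
        {((a : ℤ) - j, h j), (h j + 1, (a : ℤ) + j)}) +
      ((Finset.Icc a (N - 1)).val.bind fun j =>
        {((0 : ℤ), g j), (g j + 1, (a : ℤ) + j)}))

/- ## Auxiliary machinery -/

section PentAux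

open SimpleGraph

/-- A graph admitting a rank function where every vertex has at most one lower-rank neighbour
and adjacent vertices have distinct ranks is acyclic. -/
lemma acyclic_of_rank {V : Type*} (G : SimpleGraph V) (rank : V → ℕ)
    (hdiff : ∀ u v, G.Adj u v → rank u ≠ rank v)
    (hone : ∀ v u w, G.Adj v u → G.Adj v w → rank u < rank v → rank w < rank v → u = w) :
    G.IsAcyclic := by
  intro v c hc
  classical
  obtain ⟨u, hu, hmax⟩ : ∃ u ∈ c.support, ∀ x ∈ c.support, rank x ≤ rank u := by
    obtain ⟨u, hu, hmax⟩ := Finset.exists_max_image c.support.toFinset rank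
      ⟨v, by simp [Walk.start_mem_support]⟩
    exact ⟨u, by simpa using hu, fun x hx => hmax x (by simpa using hx)⟩
  have hmem : ∀ x, x ∈ (c.rotate u hu).support → x ∈ c.support := by
    intro x hx
    rw [Walk.support_eq_cons] at hx
    rcases List.mem_cons.1 hx with rfl | hx
    · exact hu
    · have := (Walk.support_rotate c u hu).mem_iff.1 hx
      rw [Walk.support_eq_cons]
      exact List.mem_cons_of_mem _ this
  set c' := c.rotate u hu with hc'def
  have hcyc : c'.IsCycle := hc.rotate hu
  have hne : ¬ c'.Nil := fun hn => Walk.IsCycle.not_of_nil (hn.eq_nil ▸ hcyc)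
  obtain ⟨x, hadj, p, hp⟩ := Walk.not_nil_iff.1 hne
  have hpne : ¬ p.Nil := Walk.not_nil_of_ne (Ne.symm hadj.ne)
  have hprne : ¬ p.reverse.Nil := by
    rwa [Walk.nil_iff_length_eq, Walk.length_reverse, ← Walk.nil_iff_length_eq]
  obtain ⟨y, hadj', q, hq⟩ := Walk.not_nil_iff.1 hprne
  have hyp : y ∈ p.support := by
    have : y ∈ p.reverse.support := by rw [hq]; simp
    rwa [Walk.support_reverse, List.mem_reverse] at this
  have hysup : y ∈ c'.support := by
    rw [hp, Walk.support_cons]; exact List.mem_cons_of_mem _ hyp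
  have hxsup : x ∈ c'.support := by
    rw [hp, Walk.support_cons]
    exact List.mem_cons_of_mem _ p.start_mem_support
  have hrx : rank x < rank u :=
    lt_of_le_of_ne (hmax x (hmem x hxsup)) (fun h => hdiff u x hadj h.symm)
  have hry : rank y < rank u :=
    lt_of_le_of_ne (hmax y (hmem y hysup)) (fun h => hdiff u y hadj' h.symm)
  have hxy : x = y := hone u x y hadj hadj' hrx hry
  subst hxy
  have hedges : c'.edges = s(u, x) :: p.edges := by rw [hp]; simp
  have hpe : s(u, x) ∈ p.edges := by
    have h2 : p.edges.reverse = s(u, x) :: q.edges := by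
      rw [← Walk.edges_reverse, hq, Walk.edges_cons, Sym2.eq_swap]
    have : p.edges = (s(u, x) :: q.edges).reverse := by
      rw [← h2, List.reverse_reverse]
    rw [this, List.reverse_cons]
    exact List.mem_append_right _ (by simp)
  have hnodup : c'.edges.Nodup := hcyc.edges_nodup
  rw [hedges] at hnodup
  exact (List.nodup_cons.1 hnodup).1 hpe

/-- First interval of the `j`-th pair. -/
def pentP (a : ℕ) (H : ℕ → ℤ) (j : ℕ) : ℤ × ℤ := (if j < a then (a:ℤ) - j else 0, H j)
/-- Second interval of the `j`-th pair. -/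
def pentQ (a : ℕ) (H : ℕ → ℤ) (j : ℕ) : ℤ × ℤ := (H j + 1, (a:ℤ) + j)
/-- Enumeration of the intervals of the pentagon system. -/
def pentF (a : ℕ) (H : ℕ → ℤ) (k : ℕ) : ℤ × ℤ :=
  if k = 0 then ((a:ℤ), (a:ℤ)) else if k % 2 = 1 then pentP a H ((k+1)/2) else pentQ a H (k/2)

/-- Rank function on the vertices of the graph of the pentagon system. -/
def pentRank (a N : ℕ) : (Fin (2*N-1) ⊕ Fin (a+N)) → ℕ
  | Sum.inl k => if (k:ℕ) = 0 then 1 else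
      if (k:ℕ) % 2 = 1 then 2*(N + ((k:ℕ)+1)/2) - 1 else (k:ℕ) + 1
  | Sum.inr i => if a - 1 ≤ (i:ℕ) then 2*((i:ℕ) - (a-1)) else 2*(N + (a - 1 - (i:ℕ)))

lemma pentP_fst (a : ℕ) (H : ℕ → ℤ) (j : ℕ) :
    (pentP a H j).1 = if j < a then (a:ℤ) - j else 0 := rfl
lemma pentP_snd (a : ℕ) (H : ℕ → ℤ) (j : ℕ) : (pentP a H j).2 = H j := rfl
lemma pentQ_fst (a : ℕ) (H : ℕ → ℤ) (j : ℕ) : (pentQ a H j).1 = H j + 1 := rfl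
lemma pentQ_snd (a : ℕ) (H : ℕ → ℤ) (j : ℕ) : (pentQ a H j).2 = (a:ℤ) + j := rfl

lemma pentF_zero (a : ℕ) (H : ℕ → ℤ) : pentF a H 0 = ((a:ℤ), (a:ℤ)) := rfl
lemma pentF_odd (a : ℕ) (H : ℕ → ℤ) {k : ℕ} (h1 : k % 2 = 1) :
    pentF a H k = pentP a H ((k+1)/2) := by
  rw [pentF, if_neg (by omega), if_pos h1]
lemma pentF_even (a : ℕ) (H : ℕ → ℤ) {k : ℕ} (h0 : k ≠ 0) (h1 : k % 2 = 0) :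
    pentF a H k = pentQ a H (k/2) := by
  rw [pentF, if_neg h0, if_neg (by omega)]

lemma pentRank_inl_zero (a N : ℕ) (k : Fin (2*N-1)) (h : (k:ℕ) = 0) :
    pentRank a N (Sum.inl k) = 1 := by simp [pentRank, h]
lemma pentRank_inl_odd (a N : ℕ) (k : Fin (2*N-1)) (h1 : (k:ℕ) % 2 = 1) :
    pentRank a N (Sum.inl k) = 2*(N + ((k:ℕ)+1)/2) - 1 := by
  have : (k:ℕ) ≠ 0 := by omega
  simp [pentRank, this, h1]
lemma pentRank_inl_even (a N : ℕ) (k : Fin (2*N-1)) (h0 : (k:ℕ) ≠ 0) (h1 : (k:ℕ) % 2 = 0) :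
    pentRank a N (Sum.inl k) = (k:ℕ) + 1 := by
  simp [pentRank, h0, h1]
lemma pentRank_inr (a N : ℕ) (i : Fin (a+N)) :
    pentRank a N (Sum.inr i)
      = if a - 1 ≤ (i:ℕ) then 2*((i:ℕ) - (a-1)) else 2*(N + (a - 1 - (i:ℕ))) := rfl

section Graph

variable (a N : ℕ) (H : ℕ → ℤ)

lemma adj_inl_inr (k : Fin (2*N-1)) (i : Fin (a+N)) :
    (systemGraph (a+N) (fun k : Fin (2*N-1) => pentF a H (k:ℕ))).Adj (Sum.inl k) (Sum.inr i) ↔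
      ((pentF a H (k:ℕ)).2 = ((i:ℕ) : ℤ) ∨ (pentF a H (k:ℕ)).1 = ((i:ℕ) : ℤ) + 1) := by
  simp [systemGraph, SimpleGraph.fromRel_adj]

lemma not_adj_inl_inl (k k' : Fin (2*N-1)) :
    ¬ (systemGraph (a+N) (fun k : Fin (2*N-1) => pentF a H (k:ℕ))).Adj
      (Sum.inl k) (Sum.inl k') := by
  simp [systemGraph, SimpleGraph.fromRel_adj]

lemma not_adj_inr_inr (i i' : Fin (a+N)) :
    ¬ (systemGraph (a+N) (fun k : Fin (2*N-1) => pentF a H (k:ℕ))).Adj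
      (Sum.inr i) (Sum.inr i') := by
  simp [systemGraph, SimpleGraph.fromRel_adj]

variable (ha : 1 ≤ a) (hlt : a < N)
  (hH : ∀ j, 1 ≤ j → j ≤ N-1 → (a:ℤ) ≤ H j ∧ H j ≤ (a:ℤ) + j - 1)

include ha hlt in
lemma pent_rank_parity (u v : Fin (2*N-1) ⊕ Fin (a+N))
    (h : (systemGraph (a+N) (fun k : Fin (2*N-1) => pentF a H (k:ℕ))).Adj u v) :
    pentRank a N u ≠ pentRank a N v := by
  have key : ∀ k : Fin (2*N-1), pentRank a N (Sum.inl k) % 2 = 1 := by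
    intro k
    simp only [pentRank]
    split_ifs <;> omega
  have key2 : ∀ i : Fin (a+N), pentRank a N (Sum.inr i) % 2 = 0 := by
    intro i
    simp only [pentRank]
    split_ifs <;> omega
  rcases u with k | i <;> rcases v with k' | i'
  · exact absurd h (not_adj_inl_inl a N H k k')
  · intro he
    have h1 := key k
    have h2 := key2 i'
    omega
  · intro he
    have h1 := key k'
    have h2 := key2 i
    omega
  · exact absurd h (not_adj_inr_inr a N H i i')

include ha hlt hH in
lemma pent_adj_lt (i : Fin (a+N)) (k : Fin (2*N-1))
    (hadj : (pentF a H (k:ℕ)).2 = ((i:ℕ) : ℤ) ∨ (pentF a H (k:ℕ)).1 = ((i:ℕ) : ℤ) + 1)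
    (hltr : pentRank a N (Sum.inl k) < pentRank a N (Sum.inr i)) :
    (k:ℕ) = if (i:ℕ) ≤ a-1 then 2*(a-1-(i:ℕ))-1 else if (i:ℕ) = a then 0 else 2*((i:ℕ)-a) := by
  have hk2 : (k:ℕ) < 2*N-1 := k.isLt
  have hi2 : (i:ℕ) < a+N := i.isLt
  rw [pentRank_inr] at hltr
  by_cases hk0 : (k:ℕ) = 0
  · rw [hk0, pentF_zero] at hadj
    rw [pentRank_inl_zero a N k hk0] at hltr
    simp only [Prod.fst, Prod.snd] at hadj
    rcases hadj with h | h <;> [skip; skip] <;> split_ifs at hltr ⊢ <;> omega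
  · by_cases hk1 : (k:ℕ) % 2 = 1
    · set j := ((k:ℕ)+1)/2 with hj
      have hj1 : 1 ≤ j := by omega
      have hjN : j ≤ N-1 := by omega
      obtain ⟨hHl, hHr⟩ := hH j hj1 hjN
      rw [pentF_odd a H hk1, pentP_snd, pentP_fst, ← hj] at hadj
      rw [pentRank_inl_odd a N k hk1, ← hj] at hltr
      rcases hadj with h | h
      · split_ifs at hltr <;> omega
      · split_ifs at h with hja
        · split_ifs <;> omega
        · omega
    · set j := (k:ℕ)/2 with hj
      have hj1 : 1 ≤ j := by omega
      have hjN : j ≤ N-1 := by omega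
      obtain ⟨hHl, hHr⟩ := hH j hj1 hjN
      rw [pentF_even a H hk0 (by omega), pentQ_snd, pentQ_fst, ← hj] at hadj
      rw [pentRank_inl_even a N k hk0 (by omega)] at hltr
      rcases hadj with h | h
      · split_ifs <;> omega
      · split_ifs at hltr <;> omega

include ha hlt hH in
lemma pent_adj_lt' (k : Fin (2*N-1)) (i : Fin (a+N))
    (hadj : (pentF a H (k:ℕ)).2 = ((i:ℕ) : ℤ) ∨ (pentF a H (k:ℕ)).1 = ((i:ℕ) : ℤ) + 1)
    (hltr : pentRank a N (Sum.inr i) < pentRank a N (Sum.inl k)) :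
    (i:ℕ) = if (k:ℕ) = 0 then a-1 else (H (((k:ℕ)+1)/2)).toNat := by
  have hk2 : (k:ℕ) < 2*N-1 := k.isLt
  have hi2 : (i:ℕ) < a+N := i.isLt
  rw [pentRank_inr] at hltr
  by_cases hk0 : (k:ℕ) = 0
  · rw [hk0, pentF_zero] at hadj
    rw [pentRank_inl_zero a N k hk0] at hltr
    simp only [Prod.fst, Prod.snd] at hadj
    rw [if_pos hk0]
    rcases hadj with h | h <;> split_ifs at hltr <;> omega
  · rw [if_neg hk0]
    by_cases hk1 : (k:ℕ) % 2 = 1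
    · set j := ((k:ℕ)+1)/2 with hj
      have hj1 : 1 ≤ j := by omega
      have hjN : j ≤ N-1 := by omega
      obtain ⟨hHl, hHr⟩ := hH j hj1 hjN
      rw [pentF_odd a H hk1, pentP_snd, pentP_fst, ← hj] at hadj
      rw [pentRank_inl_odd a N k hk1, ← hj] at hltr
      rcases hadj with h | h
      · omega
      · split_ifs at h with hja
        · split_ifs at hltr <;> omega
        · omega
    · set j := (k:ℕ)/2 with hj
      have hj1 : 1 ≤ j := by omega
      have hjN : j ≤ N-1 := by omega
      obtain ⟨hHl, hHr⟩ := hH j hj1 hjN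
      have hjj : ((k:ℕ)+1)/2 = j := by omega
      rw [pentF_even a H hk0 (by omega), pentQ_snd, pentQ_fst, ← hj] at hadj
      rw [pentRank_inl_even a N k hk0 (by omega)] at hltr
      rw [hjj]
      rcases hadj with h | h
      · split_ifs at hltr <;> omega
      · omega

include ha hlt hH in
lemma pent_hone (v u w : Fin (2*N-1) ⊕ Fin (a+N))
    (hu : (systemGraph (a+N) (fun k : Fin (2*N-1) => pentF a H (k:ℕ))).Adj v u)
    (hw : (systemGraph (a+N) (fun k : Fin (2*N-1) => pentF a H (k:ℕ))).Adj v w)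
    (ru : pentRank a N u < pentRank a N v) (rw' : pentRank a N w < pentRank a N v) :
    u = w := by
  rcases v with k | i
  · rcases u with k' | i1
    · exact absurd hu (not_adj_inl_inl a N H k k')
    rcases w with k' | i2
    · exact absurd hw (not_adj_inl_inl a N H k k')
    have e1 := pent_adj_lt' a N H ha hlt hH k i1 ((adj_inl_inr a N H k i1).1 hu) ru
    have e2 := pent_adj_lt' a N H ha hlt hH k i2 ((adj_inl_inr a N H k i2).1 hw) rw'
    exact congrArg Sum.inr (Fin.ext (e1.trans e2.symm))
  · rcases u with k1 | i'
    · rcases w with k2 | i'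
      · have e1 := pent_adj_lt a N H ha hlt hH i k1 ((adj_inl_inr a N H k1 i).1 hu.symm) ru
        have e2 := pent_adj_lt a N H ha hlt hH i k2 ((adj_inl_inr a N H k2 i).1 hw.symm) rw'
        exact congrArg Sum.inl (Fin.ext (e1.trans e2.symm))
      · exact absurd hw (not_adj_inr_inr a N H i i')
    · exact absurd hu (not_adj_inr_inr a N H i i')

include ha hlt hH in
lemma pent_reach_upper : ∀ i : ℕ, a - 1 ≤ i → ∀ (hi : i < a + N),
    (systemGraph (a+N) (fun k : Fin (2*N-1) => pentF a H (k:ℕ))).Reachable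
      (Sum.inr (⟨a-1, by omega⟩ : Fin (a+N))) (Sum.inr ⟨i, hi⟩) := by
  intro i
  induction i using Nat.strong_induction_on with
  | _ i IH =>
    intro hge hi
    rcases eq_or_lt_of_le hge with heq | hgt
    · subst heq
      exact SimpleGraph.Reachable.refl _
    · by_cases hia : i = a
      · have h1 : (systemGraph (a+N) (fun k : Fin (2*N-1) => pentF a H (k:ℕ))).Adj
            (Sum.inl ⟨0, by omega⟩) (Sum.inr (⟨a-1, by omega⟩ : Fin (a+N))) := by
          rw [adj_inl_inr]
          right
          rw [pentF_zero]
          push_cast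
          omega
        have h2 : (systemGraph (a+N) (fun k : Fin (2*N-1) => pentF a H (k:ℕ))).Adj
            (Sum.inl ⟨0, by omega⟩) (Sum.inr ⟨i, hi⟩) := by
          rw [adj_inl_inr]
          left
          rw [pentF_zero]
          push_cast
          omega
        exact (h1.symm.reachable).trans h2.reachable
      · set j := i - a with hjdef
        have hj1 : 1 ≤ j := by omega
        have hjN : j ≤ N - 1 := by omega
        obtain ⟨hHl, hHr⟩ := hH j hj1 hjN
        have hdiv : (2*j) % 2 = 0 := by omega
        have hFq : pentF a H (2*j) = pentQ a H j := by
          rw [pentF_even a H (by omega) hdiv]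
          congr 1
          omega
        have hk : 2*j < 2*N-1 := by omega
        have htn : (H j).toNat < a + N := by omega
        have h1 : (systemGraph (a+N) (fun k : Fin (2*N-1) => pentF a H (k:ℕ))).Adj
            (Sum.inl ⟨2*j, hk⟩) (Sum.inr ⟨i, hi⟩) := by
          rw [adj_inl_inr]
          left
          rw [hFq, pentQ]
          push_cast
          omega
        have h2 : (systemGraph (a+N) (fun k : Fin (2*N-1) => pentF a H (k:ℕ))).Adj
            (Sum.inl ⟨2*j, hk⟩) (Sum.inr ⟨(H j).toNat, htn⟩) := by
          rw [adj_inl_inr]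
          right
          rw [hFq, pentQ]
          push_cast
          omega
        have hrec := IH ((H j).toNat) (by omega) (by omega) htn
        exact (hrec.trans h2.symm.reachable).trans h1.reachable

include ha hlt hH in
lemma pent_reach_all (v : Fin (2*N-1) ⊕ Fin (a+N)) :
    (systemGraph (a+N) (fun k : Fin (2*N-1) => pentF a H (k:ℕ))).Reachable
      (Sum.inr (⟨a-1, by omega⟩ : Fin (a+N))) v := by
  rcases v with k | i
  · rcases k with ⟨kv, hkv⟩
    by_cases hk0 : kv = 0
    · subst hk0
      have h1 : (systemGraph (a+N) (fun k : Fin (2*N-1) => pentF a H (k:ℕ))).Adj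
          (Sum.inl ⟨0, by omega⟩) (Sum.inr (⟨a-1, by omega⟩ : Fin (a+N))) := by
        rw [adj_inl_inr]
        right
        rw [pentF_zero]
        push_cast
        omega
      exact h1.symm.reachable
    · by_cases hk1 : kv % 2 = 1
      · set j := (kv+1)/2 with hjdef
        have hj1 : 1 ≤ j := by omega
        have hjN : j ≤ N - 1 := by omega
        obtain ⟨hHl, hHr⟩ := hH j hj1 hjN
        have htn : (H j).toNat < a + N := by omega
        have h1 : (systemGraph (a+N) (fun k : Fin (2*N-1) => pentF a H (k:ℕ))).Adj
            (Sum.inl ⟨kv, hkv⟩) (Sum.inr ⟨(H j).toNat, htn⟩) := by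
          rw [adj_inl_inr]
          left
          rw [pentF_odd a H hk1, pentP, ← hjdef]
          push_cast
          omega
        exact (pent_reach_upper a N H ha hlt hH ((H j).toNat) (by omega) htn).trans
          h1.symm.reachable
      · set j := kv/2 with hjdef
        have hj1 : 1 ≤ j := by omega
        have hjN : j ≤ N - 1 := by omega
        have hin : a + j < a + N := by omega
        have h1 : (systemGraph (a+N) (fun k : Fin (2*N-1) => pentF a H (k:ℕ))).Adj
            (Sum.inl ⟨kv, hkv⟩) (Sum.inr ⟨a + j, hin⟩) := by
          rw [adj_inl_inr]
          left
          rw [pentF_even a H hk0 (by omega), pentQ, ← hjdef]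
          push_cast
          omega
        exact (pent_reach_upper a N H ha hlt hH (a+j) (by omega) hin).trans h1.symm.reachable
  · rcases i with ⟨iv, hiv⟩
    by_cases hup : a - 1 ≤ iv
    · exact pent_reach_upper a N H ha hlt hH iv hup hiv
    · set j := a - 1 - iv with hjdef
      have hj1 : 1 ≤ j := by omega
      have hjN : j ≤ N - 1 := by omega
      obtain ⟨hHl, hHr⟩ := hH j hj1 hjN
      have hodd : (2*j-1) % 2 = 1 := by omega
      have hFp : pentF a H (2*j-1) = pentP a H j := by
        rw [pentF_odd a H hodd]
        congr 1
        omega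
      have hk : 2*j-1 < 2*N-1 := by omega
      have htn : (H j).toNat < a + N := by omega
      have h1 : (systemGraph (a+N) (fun k : Fin (2*N-1) => pentF a H (k:ℕ))).Adj
          (Sum.inl ⟨2*j-1, hk⟩) (Sum.inr ⟨iv, hiv⟩) := by
        rw [adj_inl_inr]
        right
        rw [hFp, pentP, if_pos (by omega : j < a)]
        push_cast
        omega
      have h2 : (systemGraph (a+N) (fun k : Fin (2*N-1) => pentF a H (k:ℕ))).Adj
          (Sum.inl ⟨2*j-1, hk⟩) (Sum.inr ⟨(H j).toNat, htn⟩) := by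
        rw [adj_inl_inr]
        left
        rw [hFp, pentP]
        push_cast
        omega
      exact ((pent_reach_upper a N H ha hlt hH ((H j).toNat) (by omega) htn).trans
        h2.symm.reachable).trans h1.reachable

include ha hlt hH in
lemma pent_isTree :
    (systemGraph (a+N) (fun k : Fin (2*N-1) => pentF a H (k:ℕ))).IsTree := by
  constructor
  · rw [SimpleGraph.connected_iff]
    refine ⟨fun u v => ?_, ⟨Sum.inr (⟨a-1, by omega⟩ : Fin (a+N))⟩⟩
    exact (pent_reach_all a N H ha hlt hH u).symm.trans (pent_reach_all a N H ha hlt hH v)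
  · exact acyclic_of_rank _ (pentRank a N) (pent_rank_parity a N H ha hlt)
      (pent_hone a N H ha hlt hH)

end Graph

/-- Canonical form of the pentagon system. -/
def pentSys (a N : ℕ) (H : ℕ → ℤ) : Multiset (ℤ × ℤ) :=
  ((a:ℤ), (a:ℤ)) ::ₘ (Finset.Ico 1 N).val.bind (fun j => {pentP a H j, pentQ a H j})

lemma multiset_filter_bind {α β : Type*} (s : Multiset α) (f : α → Multiset β)
    (p : β → Prop) [DecidablePred p] :
    (s.bind f).filter p = s.bind (fun a => (f a).filter p) := by
  induction s using Multiset.induction_on with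
  | empty => simp
  | cons a s ih => simp [Multiset.cons_bind, Multiset.filter_add, ih]

lemma pentagonSystem_eq_pentSys (a N : ℕ) (h g : ℕ → ℤ) (ha : 1 ≤ a) (haN : a ≤ N) :
    pentagonSystem a N h g = pentSys a N (fun j => if j < a then h j else g j) := by
  rw [pentagonSystem, pentSys]
  congr 1
  have h1 : Finset.Icc 1 (a-1) = Finset.Ico 1 a := by
    rw [← Finset.Ico_add_one_right_eq_Icc]; congr 1; omega
  have h2 : Finset.Icc a (N-1) = Finset.Ico a N := by
    rw [← Finset.Ico_add_one_right_eq_Icc]; congr 1; omega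
  have h3 : (Finset.Ico 1 N).val = (Finset.Ico 1 a).val + (Finset.Ico a N).val := by
    rw [← Finset.Ico_union_Ico_eq_Ico ha haN,
      ← Finset.disjUnion_eq_union _ _ (Finset.Ico_disjoint_Ico_consecutive 1 a N)]
    rfl
  rw [h1, h2, h3, Multiset.add_bind]
  congr 1
  · refine Multiset.bind_congr (fun j hj => ?_)
    rw [Finset.mem_val, Finset.mem_Ico] at hj
    simp [pentP, pentQ, hj.2]
  · refine Multiset.bind_congr (fun j hj => ?_)
    rw [Finset.mem_val, Finset.mem_Ico] at hj
    have : ¬ (j < a) := by omega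
    simp [pentP, pentQ, this]

lemma range_odd_decomp : ∀ M : ℕ,
    List.range (2*M+1) = 0 :: (List.range M).flatMap (fun j => [2*j+1, 2*j+2])
  | 0 => rfl
  | (M+1) => by
    have h : 2*(M+1)+1 = (2*M+1)+1+1 := by ring
    rw [h, List.range_succ, List.range_succ, range_odd_decomp M, List.range_succ,
      List.flatMap_append]
    simp [List.append_assoc]

lemma ofFn_pentF (a N : ℕ) (H : ℕ → ℤ) (hN : 1 ≤ N) :
    (List.ofFn (fun k : Fin (2*N-1) => pentF a H (k:ℕ)) : Multiset (ℤ × ℤ))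
      = pentSys a N H := by
  rw [List.ofFn_eq_map]
  have hl : (List.finRange (2*N-1)).map (fun k : Fin (2*N-1) => pentF a H (k:ℕ))
      = (List.range (2*N-1)).map (pentF a H) := by
    apply List.ext_getElem <;> simp
  rw [hl]
  have h2 : 2*N-1 = 2*(N-1)+1 := by omega
  rw [h2, range_odd_decomp, List.map_cons, List.map_flatMap]
  simp only [List.map_cons, List.map_nil]
  rw [pentSys, ← Multiset.cons_coe, pentF_zero]
  congr 1
  have hIco : (Finset.Ico 1 N).val = ((Finset.range (N-1)).val).map (fun j => 1+j) := by
    have e := Finset.map_add_left_Ico 0 (N-1) 1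
    have e2 : 1 + (N-1) = N := by omega
    rw [e2] at e
    rw [Finset.range_eq_Ico, ← e, Finset.map_val]
    rfl
  rw [hIco, Multiset.bind_map]
  have : ((List.range (N-1)).flatMap (fun j => [pentF a H (2*j+1), pentF a H (2*j+2)])
      : Multiset (ℤ × ℤ))
      = ((Finset.range (N-1)).val).bind
          (fun j => ↑[pentF a H (2*j+1), pentF a H (2*j+2)]) := by
    rw [Finset.range_val]
    rw [show (Multiset.range (N-1)) = ((List.range (N-1) : List ℕ) : Multiset ℕ) from rfl]
    rw [Multiset.coe_bind]
  rw [this]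
  refine Multiset.bind_congr (fun j hj => ?_)
  have e1 : pentF a H (2*j+1) = pentP a H (1+j) := by
    rw [pentF_odd a H (by omega)]; congr 1; omega
  have e2 : pentF a H (2*j+2) = pentQ a H (1+j) := by
    rw [pentF_even a H (by omega) (by omega)]; congr 1; omega
  rw [e1, e2]
  rfl

lemma card_filter_pair (p : ℤ × ℤ → Prop) [DecidablePred p] (x y : ℤ × ℤ) :
    (Multiset.filter p {x, y}).card = (if p x then 1 else 0) + (if p y then 1 else 0) := by
  rw [Multiset.insert_eq_cons, Multiset.filter_cons, Multiset.filter_singleton,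
    Multiset.card_add]
  split_ifs <;> simp

lemma pentSys_card (a N : ℕ) (H : ℕ → ℤ) (hN : 1 ≤ N) :
    (pentSys a N H).card = 2*N-1 := by
  rw [← ofFn_pentF a N H hN, Multiset.coe_card, List.length_ofFn]

lemma pentSys_proper (a N : ℕ) (H : ℕ → ℤ) (m : ℤ) (σ : ℤ → ℕ)
    (ha : 1 ≤ a) (haN : a < N)
    (hH : ∀ j, 1 ≤ j → j ≤ N-1 → (a:ℤ) ≤ H j ∧ H j ≤ (a:ℤ) + j - 1)
    (hm : m = (a:ℤ) + N)
    (hσ : ∀ i : ℤ, 0 ≤ i → i ≤ m → σ i = (min ((N:ℤ) - a + i) ((a:ℤ) + N - i)).toNat) :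
    IsProperSystem m σ (pentSys a N H) := by
  subst hm
  constructor
  · intro I hI
    rw [pentSys, Multiset.mem_cons] at hI
    rcases hI with rfl | hI
    · refine ⟨by positivity, le_refl _, by omega⟩
    · rw [Multiset.mem_bind] at hI
      obtain ⟨j, hj, hIj⟩ := hI
      rw [Finset.mem_val, Finset.mem_Ico] at hj
      obtain ⟨hHl, hHr⟩ := hH j hj.1 (by omega)
      have hji : (j:ℤ) ≤ (N:ℤ) - 1 := by omega
      rw [Multiset.insert_eq_cons, Multiset.mem_cons, Multiset.mem_singleton] at hIj
      rcases hIj with rfl | rfl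
      · rw [pentP]
        refine ⟨?_, ?_, by omega⟩ <;> split_ifs with hja
        · have : (j:ℤ) < a := by exact_mod_cast hja
          omega
        · omega
        · have : (j:ℤ) < a := by exact_mod_cast hja
          omega
        · omega
      · rw [pentQ]
        refine ⟨by omega, by omega, by omega⟩
  · intro i hi0 him
    classical
    rw [pentSys, Multiset.filter_cons, Multiset.card_add, multiset_filter_bind,
      Multiset.card_bind]
    have hfirst : (if ((fun I : ℤ × ℤ => I.1 ≤ i ∧ i ≤ I.2) ((a:ℤ), (a:ℤ))) then
        ({((a:ℤ), (a:ℤ))} : Multiset (ℤ × ℤ)) else 0).card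
        = if ((a:ℤ) ≤ i ∧ i ≤ (a:ℤ)) then 1 else 0 := by
      split_ifs <;> simp_all
    rw [hfirst]
    set c : ℕ := max (((a:ℤ) - i).toNat) ((i - (a:ℤ)).toNat) with hc
    have hmap : Multiset.map
        (Multiset.card ∘ fun j => Multiset.filter (fun I : ℤ × ℤ => I.1 ≤ i ∧ i ≤ I.2)
          {pentP a H j, pentQ a H j}) (Finset.Ico 1 N).val
        = Multiset.map (fun j => if c ≤ j then 1 else 0) (Finset.Ico 1 N).val := by
      refine Multiset.map_congr rfl (fun j hj => ?_)
      rw [Finset.mem_val, Finset.mem_Ico] at hj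
      obtain ⟨hHl, hHr⟩ := hH j hj.1 (by omega)
      have hjN : (j:ℤ) ≤ (N:ℤ) - 1 := by omega
      rw [Function.comp_apply, card_filter_pair, pentP, pentQ]
      by_cases hja : j < a
      · have hjai : (j:ℤ) < a := by exact_mod_cast hja
        rw [if_pos hja]
        split_ifs <;> omega
      · have hjai : ¬ ((j:ℤ) < a) := by exact_mod_cast hja
        rw [if_neg hja]
        split_ifs <;> omega
    rw [hmap, ← Finset.sum_eq_multiset_sum, ← Finset.sum_filter]
    have hfilt : (Finset.Ico 1 N).filter (fun j => c ≤ j) = Finset.Ico (max 1 c) N := by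
      ext x
      simp only [Finset.mem_filter, Finset.mem_Ico, le_max_iff, max_le_iff]
      omega
    rw [hfilt, Finset.sum_const, smul_eq_mul, mul_one, Nat.card_Ico, hσ i hi0 him]
    split_ifs <;> omega

end PentAux


/-- Let `n ≥ 1` and `1 ≤ d₁ < d`; set `a = n(d - d₁)` and `m = n(2d - d₁)`.
For `j ∈ {1, …, a-1}` let `h j` be an integer with `a ≤ h j ≤ a + j - 1`, and for
`j ∈ {a, …, nd-1}` let `g j` be an integer with
`a + n⌊(j-a)/n⌋ ≤ g j ≤ a + n⌊(j-a)/n⌋ + n - 1`.  Then the multiset consisting of the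
one-point interval `[a, a]`, the intervals `[a - j, h j]` and `[h j + 1, a + j]` for
`j = 1, …, a-1`, and the intervals `[0, g j]` and `[g j + 1, a + j]` for `j = a, …, nd-1`,
is an admissible proper system with parameters `m = n(2d - d₁)` and
`σ(i) = min(n d₁ + i, m - i)`, consisting of exactly `2nd - 1` intervals. -/
theorem statement7 (n d d₁ : ℕ) (hn : 1 ≤ n) (hd₁ : 1 ≤ d₁) (hd : d₁ < d) (h g : ℕ → ℤ)
    (hh : ∀ j : ℕ, 1 ≤ j → j ≤ n * (d - d₁) - 1 →
      (n * (d - d₁) : ℤ) ≤ h j ∧ h j ≤ (n * (d - d₁) : ℤ) + j - 1)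
    (hg : ∀ j : ℕ, n * (d - d₁) ≤ j → j ≤ n * d - 1 →
      (n * (d - d₁) + n * ((j - n * (d - d₁)) / n) : ℤ) ≤ g j ∧
        g j ≤ (n * (d - d₁) + n * ((j - n * (d - d₁)) / n) : ℤ) + n - 1) :
    IsProperSystem (n * (2 * d - d₁))
        (fun i : ℤ => (min ((n : ℤ) * d₁ + i) ((n * (2 * d - d₁) : ℕ) - i)).toNat)
        (pentagonSystem (n * (d - d₁)) (n * d) h g) ∧
      IsAdmissible (n * (2 * d - d₁)) (pentagonSystem (n * (d - d₁)) (n * d) h g) ∧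
      (pentagonSystem (n * (d - d₁)) (n * d) h g).card = 2 * (n * d) - 1 := by
  have hd' : d₁ ≤ d := le_of_lt hd
  have ha : 1 ≤ n * (d - d₁) := Nat.mul_pos (by omega) (by omega)
  have hNa : n * d = n * (d - d₁) + n * d₁ := by
    rw [← Nat.mul_add]
    congr 1
    omega
  have hd₁pos : 1 ≤ n * d₁ := Nat.mul_pos (by omega) (by omega)
  have hltN : n * (d - d₁) < n * d := by omega
  have hm : n * (2 * d - d₁) = n * (d - d₁) + n * d := by
    rw [← Nat.mul_add]
    congr 1
    omega
  have hcast : ((n * (d - d₁) : ℕ) : ℤ) = (n : ℤ) * ((d : ℤ) - (d₁ : ℤ)) := by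
    rw [Nat.cast_mul, Nat.cast_sub hd']
  have hnA : (n : ℤ) ≤ ((n * (d - d₁) : ℕ) : ℤ) := by
    exact_mod_cast Nat.le_mul_of_pos_right n (by omega : 0 < d - d₁)
  have hH : ∀ j, 1 ≤ j → j ≤ n * d - 1 →
      ((n * (d - d₁) : ℕ) : ℤ) ≤ (fun j => if j < n * (d - d₁) then h j else g j) j ∧
      (fun j => if j < n * (d - d₁) then h j else g j) j ≤ ((n * (d - d₁) : ℕ) : ℤ) + j - 1 := by
    intro j h1 h2
    simp only
    by_cases hja : j < n * (d - d₁)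
    · rw [if_pos hja]
      obtain ⟨b1, b2⟩ := hh j h1 (by omega)
      rw [hcast]
      exact ⟨b1, b2⟩
    · rw [if_neg hja]
      obtain ⟨b1, b2⟩ := hg j (by omega) (by omega)
      have hx : (0 : ℤ) ≤ (j : ℤ) - (n : ℤ) * ((d : ℤ) - (d₁ : ℤ)) := by
        rw [← hcast]
        have : ((n * (d - d₁) : ℕ) : ℤ) ≤ (j : ℤ) := by exact_mod_cast not_lt.1 hja
        omega
      have hn0 : (0 : ℤ) < (n : ℤ) := by exact_mod_cast hn
      have hdm := Int.mul_ediv_add_emod ((j : ℤ) - (n : ℤ) * ((d : ℤ) - (d₁ : ℤ))) (n : ℤ)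
      have hq0 : (0 : ℤ) ≤ ((j : ℤ) - (n : ℤ) * ((d : ℤ) - (d₁ : ℤ))) / (n : ℤ) :=
        Int.ediv_nonneg hx (le_of_lt hn0)
      have hnq : (0 : ℤ) ≤ (n : ℤ) * (((j : ℤ) - (n : ℤ) * ((d : ℤ) - (d₁ : ℤ))) / (n : ℤ)) :=
        mul_nonneg (le_of_lt hn0) hq0
      have hr0 : (0 : ℤ) ≤ ((j : ℤ) - (n : ℤ) * ((d : ℤ) - (d₁ : ℤ))) % (n : ℤ) :=
        Int.emod_nonneg _ (ne_of_gt hn0)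
      rw [hcast]
      constructor
      · linarith
      · linarith
  constructor
  · -- proper system
    rw [pentagonSystem_eq_pentSys (n * (d - d₁)) (n * d) h g ha (le_of_lt hltN)]
    refine pentSys_proper (n * (d - d₁)) (n * d) _ _ _ ha hltN hH ?_ ?_
    · have h2d : ((n * (2 * d - d₁) : ℕ) : ℤ)
          = ((n * (d - d₁) : ℕ) : ℤ) + ((n * d : ℕ) : ℤ) := by
        exact_mod_cast hm
      rw [← h2d]
      push_cast [Nat.cast_sub (by omega : d₁ ≤ 2 * d)]
      ring
    · intro i hi0 him
      have e1 : ((n * d : ℕ) : ℤ) = ((n * (d - d₁) : ℕ) : ℤ) + (n : ℤ) * (d₁ : ℤ) := by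
        exact_mod_cast hNa
      have e2 : ((n * (2 * d - d₁) : ℕ) : ℤ)
          = ((n * (d - d₁) : ℕ) : ℤ) + ((n * d : ℕ) : ℤ) := by
        exact_mod_cast hm
      rw [e2, e1]
      ring_nf
  constructor
  · -- admissible
    rw [hm, pentagonSystem_eq_pentSys (n * (d - d₁)) (n * d) h g ha (le_of_lt hltN)]
    exact ⟨2 * (n * d) - 1, fun k => pentF (n * (d - d₁))
        (fun j => if j < n * (d - d₁) then h j else g j) (k : ℕ),
      ofFn_pentF _ _ _ (by omega),
      pent_isTree (n * (d - d₁)) (n * d) _ ha hltN hH⟩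
  · -- cardinality
    rw [pentagonSystem_eq_pentSys (n * (d - d₁)) (n * d) h g ha (le_of_lt hltN)]
    exact pentSys_card _ _ _ (by omega)
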